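/- Let A, C, Q, Z, B, D be bounded linear operators, I + Q invertible, L := (I + Q)⁻¹ ∘ Z, E := A + Z ∘ C + Q ∘ (A - I), ‖E‖ < 1. Then for every w, x₀, the unique e with e = (A + L∘C) e − L(D w) − B w − x₀ satisfies ‖e‖ ≤ (1/(1-‖E‖)) * ( ‖Z∘D + (I+Q)∘B‖ * ‖w‖ + ‖I + Q‖ * ‖x₀‖ ). -/

import Mathlib

theorem stmt_7 {X₁ Y₁ W : Type*}
    [NormedAddCommGroup X₁] [NormedSpace ℝ X₁] [CompleteSpace X₁]
    [NormedAddCommGroup Y₁] [NormedSpace ℝ Y₁] [CompleteSpace Y₁]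
    [NormedAddCommGroup W] [NormedSpace ℝ W] [CompleteSpace W]
    (A Q : X₁ →L[ℝ] X₁) (C : X₁ →L[ℝ] Y₁) (Z : Y₁ →L[ℝ] X₁)
    (B : W →L[ℝ] X₁) (D : W →L[ℝ] Y₁)
    (hQ : IsUnit (1 + Q))
    (L : Y₁ →L[ℝ] X₁) (hL : L = (Ring.inverse (1 + Q) : X₁ →L[ℝ] X₁).comp Z)
    (E : X₁ →L[ℝ] X₁) (hE : E = A + Z.comp C + Q * (A - 1))
    (hEnorm : ‖E‖ < 1) (w : W) (x₀ : X₁) :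
    (∃! e : X₁, e = (A + L.comp C) e - L (D w) - B w - x₀) ∧
      ∀ e : X₁, e = (A + L.comp C) e - L (D w) - B w - x₀ →
        ‖e‖ ≤ (1 / (1 - ‖E‖)) *
          (‖Z.comp D + (1 + Q).comp B‖ * ‖w‖ + ‖(1 + Q : X₁ →L[ℝ] X₁)‖ * ‖x₀‖) := by
  set P : X₁ →L[ℝ] X₁ := 1 + Q with hP
  set r : X₁ := Z (D w) + P (B w) + P x₀ with hr
  have hPL : ∀ y : Y₁, P (L y) = Z y := by
    intro y
    have : P.comp L = Z := by
      rw [hL, ← ContinuousLinearMap.comp_assoc]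
      have : P.comp (Ring.inverse (1 + Q) : X₁ →L[ℝ] X₁) = 1 := Ring.mul_inverse_cancel _ hQ
      rw [this, ContinuousLinearMap.one_def, ContinuousLinearMap.id_comp]
    calc P (L y) = (P.comp L) y := rfl
    _ = Z y := by rw [this]
  have hinvP : ∀ x : X₁, P x = 0 → x = 0 := by
    intro x hx
    have h1 : (Ring.inverse P : X₁ →L[ℝ] X₁) * P = 1 := Ring.inverse_mul_cancel _ hQ
    have := congrArg (Ring.inverse P : X₁ →L[ℝ] X₁) hx
    simpa [← ContinuousLinearMap.comp_apply, ← ContinuousLinearMap.mul_def, h1] using this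
  -- central identity
  have key : ∀ e : X₁, P (e - ((A + L.comp C) e - L (D w) - B w - x₀)) = (e - E e) + r := by
    intro e
    have hEapp : E e = A e + Z (C e) + (Q (A e) - Q e) := by
      simp [hE, ContinuousLinearMap.add_apply, ContinuousLinearMap.mul_apply,
        ContinuousLinearMap.sub_apply, ContinuousLinearMap.one_apply, map_sub]
    simp only [ContinuousLinearMap.add_apply, ContinuousLinearMap.comp_apply, map_sub, map_add,
      hPL, hEapp, hr]
    simp only [hP, ContinuousLinearMap.add_apply, ContinuousLinearMap.one_apply]
    abel
  have equiv : ∀ e : X₁, (e = (A + L.comp C) e - L (D w) - B w - x₀) ↔ (e - E e = -r) := by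
    intro e
    constructor
    · intro h
      have : P (e - ((A + L.comp C) e - L (D w) - B w - x₀)) = 0 := by rw [← h]; simp
      rw [key e] at this
      exact eq_neg_of_add_eq_zero_left this
    · intro h
      have h0 : P (e - ((A + L.comp C) e - L (D w) - B w - x₀)) = 0 := by
        rw [key e, h]; abel
      have := hinvP _ h0
      have := sub_eq_zero.mp this
      exact this
  set u : (X₁ →L[ℝ] X₁)ˣ := Units.oneSub E hEnorm with hu
  have huval : (u : X₁ →L[ℝ] X₁) = 1 - E := rfl
  have hfix : ∀ e : X₁, e - E e = (u : X₁ →L[ℝ] X₁) e := by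
    intro e; simp [huval, ContinuousLinearMap.sub_apply]
  have hinj : ∀ x y : X₁, (u : X₁ →L[ℝ] X₁) x = (u : X₁ →L[ℝ] X₁) y → x = y := by
    intro x y hxy
    have := congrArg (↑u⁻¹ : X₁ →L[ℝ] X₁) hxy
    simpa [← ContinuousLinearMap.comp_apply, ← ContinuousLinearMap.mul_def, ← Units.val_mul] using this
  constructor
  · refine ⟨(↑u⁻¹ : X₁ →L[ℝ] X₁) (-r), ?_, ?_⟩
    · show _ = _
      rw [equiv, hfix]
      rw [← ContinuousLinearMap.comp_apply, ← ContinuousLinearMap.mul_def, ← Units.val_mul]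
      simp
    · intro y hy
      have hy' := (equiv y).mp hy
      apply hinj
      rw [← hfix, hy']
      rw [← ContinuousLinearMap.comp_apply, ← ContinuousLinearMap.mul_def, ← Units.val_mul]
      simp
  · intro e he
    have h := (equiv e).mp he
    have he2 : E e - r = e := by rw [sub_eq_add_neg, ← h]; abel
    have hnr : ‖r‖ ≤ ‖Z.comp D + (1 + Q).comp B‖ * ‖w‖ + ‖(1 + Q : X₁ →L[ℝ] X₁)‖ * ‖x₀‖ := by
      have hrw : r = (Z.comp D + (1 + Q).comp B) w + P x₀ := by
        simp [hr, ContinuousLinearMap.add_apply, ContinuousLinearMap.comp_apply, hP]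
      rw [hrw]
      refine le_trans (norm_add_le _ _) (add_le_add ?_ ?_)
      · exact (Z.comp D + (1 + Q).comp B).le_opNorm w
      · exact (1 + Q : X₁ →L[ℝ] X₁).le_opNorm x₀
    have hne : ‖e‖ ≤ ‖E‖ * ‖e‖ + ‖r‖ := by
      calc ‖e‖ = ‖E e - r‖ := by rw [he2]
      _ ≤ ‖E e‖ + ‖r‖ := norm_sub_le _ _
      _ ≤ ‖E‖ * ‖e‖ + ‖r‖ := by gcongr; exact E.le_opNorm e
    have hpos : (0:ℝ) < 1 - ‖E‖ := by linarith
    rw [div_mul_eq_mul_div, one_mul, le_div_iff₀ hpos]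
    nlinarith
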